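/- Let V₁, V₂, V₃ be finite-dimensional vector spaces and let (f, g), (f', g') ∈ Hom(V₁,V₂) × Hom(V₃,V₂). Then there exist invertible linear maps A ∈ GL(V₁), B ∈ GL(V₂), C ∈ GL(V₃) with f' = B ∘ f ∘ A⁻¹ and g' = B ∘ g ∘ C⁻¹ if and only if rank f = rank f', rank g = rank g', and dim(im f + im g) = dim(im f' + im g'). -/

import Mathlib

open Module

section Helpers

variable {k : Type*} [Field k]

/-- Any submodule `I ≤ W` has a complement inside `W`. -/
theorem a3_exists_compl_inside {V : Type*} [AddCommGroup V] [Module k V]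
    (I W : Submodule k V) (h : I ≤ W) :
    ∃ E : Submodule k V, E ≤ W ∧ I ⊓ E = ⊥ ∧ I ⊔ E = W := by
  obtain ⟨q, hq⟩ := Submodule.exists_isCompl (I.comap W.subtype)
  refine ⟨q.map W.subtype, ?_, ?_, ?_⟩
  · simpa using Submodule.map_subtype_le W q
  · have := hq.disjoint
    rw [disjoint_iff] at this
    have hI : I = (I.comap W.subtype).map W.subtype := by
      rw [Submodule.map_comap_subtype, inf_eq_right.mpr h]
    rw [hI, ← Submodule.map_inf _ (Submodule.injective_subtype W), this, Submodule.map_bot]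
  · have := hq.sup_eq_top
    have hI : I = (I.comap W.subtype).map W.subtype := by
      rw [Submodule.map_comap_subtype, inf_eq_right.mpr h]
    rw [hI, ← Submodule.map_sup, this, Submodule.map_top, Submodule.range_subtype]

/-- Between spaces of equal dimension, a submodule can be carried to any submodule
of the same dimension by a linear equivalence. -/
theorem a3_exists_equiv_map_eq {M M' : Type*} [AddCommGroup M] [Module k M]
    [AddCommGroup M'] [Module k M'] [FiniteDimensional k M] [FiniteDimensional k M']
    (p : Submodule k M) (p' : Submodule k M')
    (h1 : finrank k p = finrank k p') (h2 : finrank k M = finrank k M') :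
    ∃ e : M ≃ₗ[k] M', p.map (e : M →ₗ[k] M') = p' := by
  obtain ⟨q, hq⟩ := Submodule.exists_isCompl p
  obtain ⟨q', hq'⟩ := Submodule.exists_isCompl p'
  have hqq : finrank k q = finrank k q' := by
    have a := Submodule.finrank_add_eq_of_isCompl hq
    have b := Submodule.finrank_add_eq_of_isCompl hq'
    omega
  let e : M ≃ₗ[k] M' :=
    (Submodule.prodEquivOfIsCompl p q hq).symm.trans
      (((LinearEquiv.ofFinrankEq _ _ h1).prodCongr (LinearEquiv.ofFinrankEq _ _ hqq)).trans
        (Submodule.prodEquivOfIsCompl p' q' hq'))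
  refine ⟨e, ?_⟩
  have hle : p.map (e : M →ₗ[k] M') ≤ p' := by
    rintro _ ⟨x, hx, rfl⟩
    obtain ⟨y, rfl⟩ : ∃ y : p, (y : M) = x := ⟨⟨x, hx⟩, rfl⟩
    have hsymm := Submodule.prodEquivOfIsCompl_symm_apply_left p q hq y
    show e ↑y ∈ p'
    simp only [e, LinearEquiv.trans_apply, hsymm, LinearEquiv.prodCongr_apply, map_zero,
      Submodule.coe_prodEquivOfIsCompl']
    simpa using Submodule.add_mem _ (SetLike.coe_mem _) (Submodule.zero_mem p')
  refine Submodule.eq_of_le_of_finrank_le hle ?_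
  rw [show p.map (e : M →ₗ[k] M') = p.map e.toLinearMap from rfl]
  rw [LinearEquiv.finrank_map_eq e p] <;> omega

/-- A pair of submodules can be carried to another pair with the same dimension data
by an automorphism. -/
theorem a3_exists_equiv_map_pair {V : Type*} [AddCommGroup V] [Module k V]
    [FiniteDimensional k V]
    (U W U' W' : Submodule k V)
    (hU : finrank k U = finrank k U') (hW : finrank k W = finrank k W')
    (hS : finrank k ↥(U ⊔ W) = finrank k ↥(U' ⊔ W')) :
    ∃ B : V ≃ₗ[k] V, U.map (B : V →ₗ[k] V) = U' ∧ W.map (B : V →ₗ[k] V) = W' := by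
  set I := U ⊓ W with hIdef
  set I' := U' ⊓ W' with hI'def
  have hIrank : finrank k I = finrank k I' := by
    have a := Submodule.finrank_sup_add_finrank_inf_eq U W
    have b := Submodule.finrank_sup_add_finrank_inf_eq U' W'
    rw [← hIdef] at a
    rw [← hI'def] at b
    omega
  obtain ⟨E, hEW, hIE, hIEsup⟩ := a3_exists_compl_inside I W inf_le_right
  obtain ⟨E', hEW', hIE', hIEsup'⟩ := a3_exists_compl_inside I' W' inf_le_right
  have hErank : finrank k E = finrank k E' := by
    have a := Submodule.finrank_sup_add_finrank_inf_eq I E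
    have b := Submodule.finrank_sup_add_finrank_inf_eq I' E'
    rw [hIEsup, hIE] at a
    rw [hIEsup', hIE'] at b
    simp only [finrank_bot] at a b
    omega
  obtain ⟨F, hF⟩ := Submodule.exists_isCompl (U ⊔ W)
  obtain ⟨F', hF'⟩ := Submodule.exists_isCompl (U' ⊔ W')
  have hFrank : finrank k F = finrank k F' := by
    have a := Submodule.finrank_add_eq_of_isCompl hF
    have b := Submodule.finrank_add_eq_of_isCompl hF'
    omega
  have hUE : U ⊓ E = ⊥ := by
    rw [← le_bot_iff, ← hIE]
    exact le_inf (le_inf inf_le_left (le_trans inf_le_right hEW)) inf_le_right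
  have hUE' : U' ⊓ E' = ⊥ := by
    rw [← le_bot_iff, ← hIE']
    exact le_inf (le_inf inf_le_left (le_trans inf_le_right hEW')) inf_le_right
  have hUEsup : U ⊔ E = U ⊔ W := by
    refine le_antisymm (sup_le le_sup_left (le_trans hEW le_sup_right)) ?_
    refine sup_le le_sup_left ?_
    rw [← hIEsup]
    exact sup_le (le_trans inf_le_left le_sup_left) le_sup_right
  have hUEsup' : U' ⊔ E' = U' ⊔ W' := by
    refine le_antisymm (sup_le le_sup_left (le_trans hEW' le_sup_right)) ?_
    refine sup_le le_sup_left ?_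
    rw [← hIEsup']
    exact sup_le (le_trans inf_le_left le_sup_left) le_sup_right
  let ψ : (↥U × ↥E × ↥F) →ₗ[k] V := U.subtype.coprod (E.subtype.coprod F.subtype)
  let ψ' : (↥U' × ↥E' × ↥F') →ₗ[k] V := U'.subtype.coprod (E'.subtype.coprod F'.subtype)
  have hbij : ∀ (U₀ E₀ F₀ : Submodule k V), U₀ ⊓ E₀ = ⊥ → (U₀ ⊔ E₀) ⊓ F₀ = ⊥ →
      (U₀ ⊔ E₀) ⊔ F₀ = ⊤ →
      Function.Bijective (U₀.subtype.coprod (E₀.subtype.coprod F₀.subtype)) := by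
    intro U₀ E₀ F₀ h1 h2 h3
    constructor
    · rw [← LinearMap.ker_eq_bot, eq_bot_iff]
      rintro ⟨x, y, z⟩ hxyz
      simp only [LinearMap.mem_ker, LinearMap.coprod_apply, Submodule.coe_subtype] at hxyz
      have hz0 : (z : V) = 0 := by
        have hmem : (z : V) ∈ (U₀ ⊔ E₀) ⊓ F₀ := by
          constructor
          · have : (z : V) = -((x : V) + y) := by linear_combination (norm := module) hxyz
            rw [this]
            exact neg_mem (add_mem (Submodule.mem_sup_left x.2) (Submodule.mem_sup_right y.2))
          · exact z.2
        rw [h2] at hmem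
        simpa using hmem
      have hx0 : (x : V) = 0 := by
        have hmem : (x : V) ∈ U₀ ⊓ E₀ := by
          constructor
          · exact x.2
          · have : (x : V) = -(y : V) := by
              rw [hz0] at hxyz; linear_combination (norm := module) hxyz
            rw [this]; exact neg_mem y.2
        rw [h1] at hmem; simpa using hmem
      have hy0 : (y : V) = 0 := by
        rw [hz0, hx0] at hxyz; simpa using hxyz
      simp only [Submodule.mem_bot, Prod.mk_eq_zero]
      exact ⟨Subtype.ext hx0, Subtype.ext hy0, Subtype.ext hz0⟩
    · rw [← LinearMap.range_eq_top, LinearMap.range_coprod, LinearMap.range_coprod,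
        Submodule.range_subtype, Submodule.range_subtype, Submodule.range_subtype,
        ← sup_assoc, h3]
  have hbi : Function.Bijective ψ := by
    refine hbij U E F hUE ?_ ?_
    · rw [hUEsup]; exact disjoint_iff.mp hF.disjoint
    · rw [hUEsup]; exact hF.sup_eq_top
  have hbi' : Function.Bijective ψ' := by
    refine hbij U' E' F' hUE' ?_ ?_
    · rw [hUEsup']; exact disjoint_iff.mp hF'.disjoint
    · rw [hUEsup']; exact hF'.sup_eq_top
  let Ψ : (↥U × ↥E × ↥F) ≃ₗ[k] V := LinearEquiv.ofBijective ψ hbi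
  let Ψ' : (↥U' × ↥E' × ↥F') ≃ₗ[k] V := LinearEquiv.ofBijective ψ' hbi'
  have hIU : I ≤ U := inf_le_left
  have hIU' : I' ≤ U' := inf_le_left
  have hcomaprank : finrank k (I.comap U.subtype) = finrank k (I'.comap U'.subtype) := by
    rw [(Submodule.comapSubtypeEquivOfLe hIU).finrank_eq,
      (Submodule.comapSubtypeEquivOfLe hIU').finrank_eq]
    exact hIrank
  obtain ⟨eU, heU⟩ := a3_exists_equiv_map_eq (I.comap U.subtype) (I'.comap U'.subtype)
    hcomaprank hU
  let eE : ↥E ≃ₗ[k] ↥E' := LinearEquiv.ofFinrankEq _ _ hErank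
  let eF : ↥F ≃ₗ[k] ↥F' := LinearEquiv.ofFinrankEq _ _ hFrank
  let B : V ≃ₗ[k] V := Ψ.symm.trans ((eU.prodCongr (eE.prodCongr eF)).trans Ψ')
  refine ⟨B, ?_, ?_⟩
  · have hle : U.map (B : V →ₗ[k] V) ≤ U' := by
      rintro _ ⟨x, hx, rfl⟩
      obtain ⟨y, rfl⟩ : ∃ y : U, (y : V) = x := ⟨⟨x, hx⟩, rfl⟩
      show B ↑y ∈ U'
      have hsymm : Ψ.symm ↑y = (y, 0, 0) := by
        rw [LinearEquiv.symm_apply_eq]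
        show (y : V) = ψ (y, 0, 0)
        simp [ψ]
      simp only [B, LinearEquiv.trans_apply, hsymm, LinearEquiv.prodCongr_apply, map_zero]
      show ψ' (eU y, 0, 0) ∈ U'
      simpa [ψ'] using (eU y).2
    refine Submodule.eq_of_le_of_finrank_le hle ?_
    rw [show U.map (B : V →ₗ[k] V) = U.map B.toLinearMap from rfl,
      LinearEquiv.finrank_map_eq B U]
    omega
  · have hle : W.map (B : V →ₗ[k] V) ≤ W' := by
      rintro _ ⟨x, hx, rfl⟩
      rw [← hIEsup] at hx
      obtain ⟨i, hi, e, he, rfl⟩ := Submodule.mem_sup.mp hx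
      show B (i + e) ∈ W'
      rw [map_add]
      refine add_mem ?_ ?_
      · have hiU : i ∈ U := hIU hi
        have hsymm : Ψ.symm i = ((⟨i, hiU⟩ : U), 0, 0) := by
          rw [LinearEquiv.symm_apply_eq]
          show i = ψ ((⟨i, hiU⟩ : U), 0, 0)
          simp [ψ]
        have hBi : B i = ↑(eU ⟨i, hiU⟩) := by
          simp only [B, LinearEquiv.trans_apply, hsymm, LinearEquiv.prodCongr_apply, map_zero]
          show ψ' (eU _, 0, 0) = _
          simp [ψ']
        rw [hBi]
        have hmem : eU ⟨i, hiU⟩ ∈ (I'.comap U'.subtype) := by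
          rw [← heU]
          exact Submodule.mem_map_of_mem (by simpa using hi)
        have : (↑(eU ⟨i, hiU⟩) : V) ∈ I' := hmem
        exact this.2
      · obtain ⟨y, rfl⟩ : ∃ y : E, (y : V) = e := ⟨⟨e, he⟩, rfl⟩
        have hsymm : Ψ.symm ↑y = (0, y, 0) := by
          rw [LinearEquiv.symm_apply_eq]
          show (y : V) = ψ (0, y, 0)
          simp [ψ]
        have hBe : B ↑y = ↑(eE y) := by
          simp only [B, LinearEquiv.trans_apply, hsymm, LinearEquiv.prodCongr_apply, map_zero]
          show ψ' (0, eE y, 0) = _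
          simp [ψ']
        rw [hBe]
        exact hEW' (eE y).2
    refine Submodule.eq_of_le_of_finrank_le hle ?_
    rw [show W.map (B : V →ₗ[k] V) = W.map B.toLinearMap from rfl,
      LinearEquiv.finrank_map_eq B W]
    omega

/-- Two linear maps with equal range differ by an automorphism of the domain. -/
theorem a3_exists_auto_of_range_eq {V₁ V₂ : Type*} [AddCommGroup V₁] [Module k V₁]
    [AddCommGroup V₂] [Module k V₂] [FiniteDimensional k V₁]
    (f h : V₁ →ₗ[k] V₂) (hr : LinearMap.range f = LinearMap.range h) :
    ∃ A : V₁ ≃ₗ[k] V₁, h = f ∘ₗ A.toLinearMap := by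
  obtain ⟨C, hC⟩ := Submodule.exists_isCompl (LinearMap.ker f)
  obtain ⟨C', hC'⟩ := Submodule.exists_isCompl (LinearMap.ker h)
  have hkrank : finrank k (LinearMap.ker h) = finrank k (LinearMap.ker f) := by
    have a := LinearMap.finrank_range_add_finrank_ker f
    have b := LinearMap.finrank_range_add_finrank_ker h
    rw [hr] at a
    omega
  have key : ∀ (φ : V₁ →ₗ[k] V₂) (D : Submodule k V₁), IsCompl (LinearMap.ker φ) D →
      ∃ e : D ≃ₗ[k] LinearMap.range φ, ∀ x : D, (e x : V₂) = φ x := by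
    intro φ D hD
    have hmap : D.map φ = LinearMap.range φ := by
      have : LinearMap.range φ = Submodule.map φ ⊤ := (Submodule.map_top φ).symm
      rw [this, ← hD.sup_eq_top, Submodule.map_sup]
      have : Submodule.map φ (LinearMap.ker φ) = ⊥ := by
        rw [eq_bot_iff]
        rintro _ ⟨x, hx, rfl⟩
        simpa using hx
      rw [this, bot_sup_eq]
    let φD : ↥D →ₗ[k] ↥(LinearMap.range φ) :=
      (φ.domRestrict D).codRestrict (LinearMap.range φ) (fun x => LinearMap.mem_range_self φ ↑x)
    have hinj : Function.Injective φD := by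
      rw [← LinearMap.ker_eq_bot, eq_bot_iff]
      intro x hx
      simp only [LinearMap.mem_ker, φD] at hx
      have hx' : φ (x : V₁) = 0 := by
        have := congrArg (Subtype.val) hx
        exact this
      have : (x : V₁) ∈ LinearMap.ker φ ⊓ D := ⟨hx', x.2⟩
      rw [hD.inf_eq_bot] at this
      simpa using Subtype.ext (by simpa using this : (x : V₁) = 0)
    have hsurj : Function.Surjective φD := by
      rintro ⟨y, hy⟩
      rw [← hmap] at hy
      obtain ⟨x, hx, rfl⟩ := hy
      exact ⟨⟨x, hx⟩, rfl⟩
    exact ⟨LinearEquiv.ofBijective φD ⟨hinj, hsurj⟩, fun x => rfl⟩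
  obtain ⟨eC, heC⟩ := key f C hC
  obtain ⟨eC', heC'⟩ := key h C' hC'
  let eK : ↥(LinearMap.ker h) ≃ₗ[k] ↥(LinearMap.ker f) := LinearEquiv.ofFinrankEq _ _ hkrank
  let mid : ↥C' ≃ₗ[k] ↥C :=
    (eC'.trans (LinearEquiv.ofEq _ _ hr.symm)).trans eC.symm
  let A : V₁ ≃ₗ[k] V₁ :=
    (Submodule.prodEquivOfIsCompl _ _ hC').symm.trans
      ((eK.prodCongr mid).trans (Submodule.prodEquivOfIsCompl _ _ hC))
  refine ⟨A, ?_⟩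
  ext x
  have hx : x ∈ LinearMap.ker h ⊔ C' := by rw [hC'.sup_eq_top]; trivial
  obtain ⟨y, hy, z, hz, rfl⟩ := Submodule.mem_sup.mp hx
  simp only [LinearMap.comp_apply, LinearEquiv.coe_coe, map_add]
  have hAy : A y = ↑(eK ⟨y, hy⟩) := by
    have hsymm : (Submodule.prodEquivOfIsCompl _ _ hC').symm y
        = ((⟨y, hy⟩ : LinearMap.ker h), 0) :=
      Submodule.prodEquivOfIsCompl_symm_apply_left _ _ hC' ⟨y, hy⟩
    simp only [A, LinearEquiv.trans_apply, hsymm, LinearEquiv.prodCongr_apply, map_zero,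
      Submodule.coe_prodEquivOfIsCompl']
    simp
  have hAz : A z = ↑(eC.symm ((LinearEquiv.ofEq _ _ hr.symm) (eC' ⟨z, hz⟩))) := by
    have hsymm : (Submodule.prodEquivOfIsCompl _ _ hC').symm z = (0, (⟨z, hz⟩ : C')) :=
      Submodule.prodEquivOfIsCompl_symm_apply_right _ _ hC' ⟨z, hz⟩
    simp only [A, LinearEquiv.trans_apply, hsymm, LinearEquiv.prodCongr_apply, map_zero,
      Submodule.coe_prodEquivOfIsCompl']
    simp [mid]
  rw [hAy, hAz]
  have h1 : h y = 0 := hy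
  have h2 : f ↑(eK ⟨y, hy⟩) = 0 := (eK ⟨y, hy⟩).2
  have h3 : f ↑(eC.symm ((LinearEquiv.ofEq _ _ hr.symm) (eC' ⟨z, hz⟩))) = h z := by
    rw [← heC, LinearEquiv.apply_symm_apply]
    rw [show ((LinearEquiv.ofEq _ _ hr.symm) (eC' ⟨z, hz⟩) : V₂) = ↑(eC' ⟨z, hz⟩) from rfl]
    exact heC' ⟨z, hz⟩
  simp [h1, h2, h3]

end Helpers

theorem a3_orbit_classification (k : Type*) [Field k]
    (V₁ V₂ V₃ : Type*) [AddCommGroup V₁] [Module k V₁] [AddCommGroup V₂] [Module k V₂]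
    [AddCommGroup V₃] [Module k V₃]
    [FiniteDimensional k V₁] [FiniteDimensional k V₂] [FiniteDimensional k V₃]
    (f f' : V₁ →ₗ[k] V₂) (g g' : V₃ →ₗ[k] V₂) :
    (∃ (A : V₁ ≃ₗ[k] V₁) (B : V₂ ≃ₗ[k] V₂) (C : V₃ ≃ₗ[k] V₃),
        f' = B.toLinearMap ∘ₗ f ∘ₗ A.symm.toLinearMap ∧
        g' = B.toLinearMap ∘ₗ g ∘ₗ C.symm.toLinearMap) ↔
      (finrank k (LinearMap.range f) = finrank k (LinearMap.range f') ∧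
       finrank k (LinearMap.range g) = finrank k (LinearMap.range g') ∧
       finrank k ↥(LinearMap.range f ⊔ LinearMap.range g) =
         finrank k ↥(LinearMap.range f' ⊔ LinearMap.range g')) := by
  constructor
  · rintro ⟨A, B, C, hf, hg⟩
    have hrf : LinearMap.range f' = (LinearMap.range f).map B.toLinearMap := by
      rw [hf, LinearMap.range_comp, LinearMap.range_comp]
      congr 1
      rw [LinearEquiv.range, Submodule.map_top]
    have hrg : LinearMap.range g' = (LinearMap.range g).map B.toLinearMap := by
      rw [hg, LinearMap.range_comp, LinearMap.range_comp]
      congr 1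
      rw [LinearEquiv.range, Submodule.map_top]
    refine ⟨?_, ?_, ?_⟩
    · rw [hrf, LinearEquiv.finrank_map_eq B]
    · rw [hrg, LinearEquiv.finrank_map_eq B]
    · rw [hrf, hrg, ← Submodule.map_sup, LinearEquiv.finrank_map_eq B]
  · rintro ⟨h1, h2, h3⟩
    obtain ⟨B, hBf, hBg⟩ := a3_exists_equiv_map_pair (LinearMap.range f) (LinearMap.range g)
      (LinearMap.range f') (LinearMap.range g') h1 h2 h3
    have hrf : LinearMap.range (B.toLinearMap ∘ₗ f) = LinearMap.range f' := by
      rw [LinearMap.range_comp]; exact hBf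
    have hrg : LinearMap.range (B.toLinearMap ∘ₗ g) = LinearMap.range g' := by
      rw [LinearMap.range_comp]; exact hBg
    obtain ⟨A', hA'⟩ := a3_exists_auto_of_range_eq (B.toLinearMap ∘ₗ f) f' hrf
    obtain ⟨C', hC'⟩ := a3_exists_auto_of_range_eq (B.toLinearMap ∘ₗ g) g' hrg
    refine ⟨A'.symm, B, C'.symm, ?_, ?_⟩
    · rw [LinearEquiv.symm_symm, hA', LinearMap.comp_assoc]
    · rw [LinearEquiv.symm_symm, hC', LinearMap.comp_assoc]
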